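/- Let (T,Σ,μ) be a σ-finite measure space, f : T × X → ℝ ∪ {+∞} a convex normal integrand with f_t := f(t,·). Fix x ∈ X, ε₁, ε₂ ≥ 0 with ε = ε₁ + ε₂, ℓ ∈ L¹(T,ℝ₊) with ∫ ℓ dμ ≤ ε₁, a weak*-integrable selection x* : T → X* with x*(t) ∈ ∂_{ℓ(t)} f_t(x) a.e. whose weak integral ∫_T x* dμ belongs to X*, and λ* ∈ N^{ε₂}_{dom I_f}(x). Then ∫_T x* dμ + λ* ∈ ∂_ε I_f(x), where I_f(x) = ∫_T f(t,x) dμ(t). -/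

import Mathlib

open MeasureTheory Set
noncomputable section

/-- The upper integral `∫_T φ dμ := inf { ∫ g dμ : g ∈ L¹(T,ℝ), φ ≤ g a.e. }` of an
extended-real-valued function, equal to `+∞` when no integrable majorant exists. -/
noncomputable def upperIntegral {T : Type*} [MeasurableSpace T] (μ : Measure T)
    (φ : T → EReal) : EReal :=
  sInf {r : EReal | ∃ g : T → ℝ, Integrable g μ ∧
    (∀ᵐ t ∂μ, φ t ≤ (g t : EReal)) ∧ r = ((∫ t, g t ∂μ : ℝ) : EReal)}

/-- Easy inclusion in the ε-subdifferential formula for convex integral functions: if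
`x*(·)` is a weak*-integrable selection of `∂_{ℓ(t)} f_t(x)` whose weak integral is
represented by `I ∈ X*`, `∫ ℓ dμ ≤ ε₁`, and `λ* ∈ N^{ε₂}_{dom I_f}(x)`, then
`I + λ* ∈ ∂_ε I_f(x)` with `ε = ε₁ + ε₂`. -/
theorem weakIntegral_selection_add_normal_mem_epsSubdiff
    {X : Type*} [AddCommGroup X] [Module ℝ X] [TopologicalSpace X]
    [IsTopologicalAddGroup X] [ContinuousSMul ℝ X] [LocallyConvexSpace ℝ X]
    {T : Type*} [MeasurableSpace T] (μ : Measure T) [SigmaFinite μ]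
    (f : T → X → EReal)
    -- `f` is a convex normal integrand:
    (hlsc : ∀ᵐ t ∂μ, LowerSemicontinuous (f t))
    (hconv : ∀ᵐ t ∂μ, Convex ℝ {p : X × ℝ | f t p.1 ≤ (p.2 : EReal)})
    (hproper : ∀ᵐ t ∂μ, (∀ y, f t y ≠ ⊥) ∧ (∃ y, f t y ≠ ⊤))
    (x : X) (ε ε₁ ε₂ : ℝ) (hε₁ : 0 ≤ ε₁) (hε₂ : 0 ≤ ε₂) (hε : ε = ε₁ + ε₂)
    (ℓ : T → ℝ) (hℓint : Integrable ℓ μ) (hℓ0 : ∀ᵐ t ∂μ, 0 ≤ ℓ t)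
    (hℓε : ∫ t, ℓ t ∂μ ≤ ε₁)
    (xs : T → WeakDual ℝ X)
    -- `xs` is weak*-integrable and its weak integral is represented by `I ∈ X*`:
    (hxsint : ∀ y : X, Integrable (fun t => xs t y) μ)
    (I : WeakDual ℝ X) (hI : ∀ y : X, I y = ∫ t, xs t y ∂μ)
    -- `xs t ∈ ∂_{ℓ t} f_t(x)` a.e.:
    (hsel : ∀ᵐ t ∂μ, ∀ y : X,
      ((xs t y - xs t x : ℝ) : EReal) ≤ f t y - f t x + ((ℓ t : ℝ) : EReal))
    -- `λ* ∈ N^{ε₂}_{dom I_f}(x)`: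
    (lam : WeakDual ℝ X)
    (hlam : ∀ y : X, upperIntegral μ (fun t => f t y) ≠ ⊤ → lam y - lam x ≤ ε₂)
    -- `I_f(x)` is finite:
    (hfinx : ∃ r : ℝ, upperIntegral μ (fun t => f t x) = (r : EReal)) :
    -- conclusion : `I + λ* ∈ ∂_ε I_f(x)`
    ∀ y : X, (((I + lam) y - (I + lam) x : ℝ) : EReal) ≤
      upperIntegral μ (fun t => f t y) - upperIntegral μ (fun t => f t x) + (ε : EReal) := by
  obtain ⟨r, hr⟩ := hfinx
  intro y
  rw [hr]
  by_cases hy : upperIntegral μ (fun t => f t y) = ⊤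
  · rw [hy, EReal.top_sub_coe]
    rw [EReal.top_add_coe]
    exact le_top
  · have hlamy : lam y - lam x ≤ ε₂ := hlam y hy
    -- key estimate against any integrable majorant g of f(·, y)
    have key : ∀ g : T → ℝ, Integrable g μ → (∀ᵐ t ∂μ, f t y ≤ (g t : EReal)) →
        I y - I x + r - ε₁ ≤ ∫ t, g t ∂μ := by
      intro g hg hgy
      set h : T → ℝ := fun t => g t + ℓ t - (xs t y - xs t x) with hh
      have hgl : Integrable (fun t => g t + ℓ t) μ := hg.add hℓint
      have hxx : Integrable (fun t => xs t y - xs t x) μ := (hxsint y).sub (hxsint x)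
      have hhint : Integrable h μ := hgl.sub hxx
      have hae : ∀ᵐ t ∂μ, f t x ≤ (h t : EReal) := by
        filter_upwards [hsel, hproper, hgy] with t hselt hpt hgyt
        have hby : f t y ≠ ⊥ := hpt.1 y
        have hty : f t y ≠ ⊤ := by
          intro h'; rw [h'] at hgyt; exact ((EReal.coe_lt_top (g t)).not_ge hgyt).elim
        have hbx : f t x ≠ ⊥ := hpt.1 x
        have htx : f t x ≠ ⊤ := by
          intro h'
          have := hselt y
          rw [h'] at this
          have hbot : f t y - (⊤ : EReal) = ⊥ := by
            rw [sub_eq_add_neg]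
            simp [EReal.add_bot]
          rw [hbot, EReal.bot_add] at this
          exact (EReal.coe_ne_bot _ (le_bot_iff.mp this)).elim
        set a := (f t x).toReal with ha
        set b := (f t y).toReal with hb
        have hax : ((a : ℝ) : EReal) = f t x := EReal.coe_toReal htx hbx
        have hay : ((b : ℝ) : EReal) = f t y := EReal.coe_toReal hty hby
        have hsel' := hselt y
        rw [← hax, ← hay] at hsel'
        rw [← hay] at hgyt
        rw [← hax]
        have h1 : xs t y - xs t x ≤ b - a + ℓ t := by exact_mod_cast hsel'
        have h2 : b ≤ g t := by exact_mod_cast hgyt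
        have : a ≤ h t := by simp only [hh]; linarith
        exact_mod_cast this
      have hmem : (((∫ t, h t ∂μ : ℝ)) : EReal) ∈
          {z : EReal | ∃ g : T → ℝ, Integrable g μ ∧
            (∀ᵐ t ∂μ, f t x ≤ (g t : EReal)) ∧ z = ((∫ t, g t ∂μ : ℝ) : EReal)} :=
        ⟨h, hhint, hae, rfl⟩
      have hle : upperIntegral μ (fun t => f t x) ≤ ((∫ t, h t ∂μ : ℝ) : EReal) :=
        sInf_le hmem
      rw [hr] at hle
      have hle' : r ≤ ∫ t, h t ∂μ := by exact_mod_cast hle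
      have hint : ∫ t, h t ∂μ
          = (∫ t, g t ∂μ) + (∫ t, ℓ t ∂μ) - ((∫ t, xs t y ∂μ) - (∫ t, xs t x ∂μ)) := by
        simp only [hh]
        rw [integral_sub hgl hxx, integral_add hg hℓint, integral_sub (hxsint y) (hxsint x)]
      rw [hint, ← hI y, ← hI x] at hle'
      linarith
    -- lower bound on the inf
    have hc : ((I y - I x + r - ε₁ : ℝ) : EReal) ≤ upperIntegral μ (fun t => f t y) := by
      apply le_sInf
      rintro z ⟨g, hg, hgy, rfl⟩
      exact_mod_cast key g hg hgy
    calc (((I + lam) y - (I + lam) x : ℝ) : EReal)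
        ≤ (((I y - I x + r - ε₁) + (ε - r) : ℝ) : EReal) := by
          apply EReal.coe_le_coe_iff.mpr
          have e1 : (I + lam) y = I y + lam y := rfl
          have e2 : (I + lam) x = I x + lam x := rfl
          rw [e1, e2]
          linarith
      _ = ((I y - I x + r - ε₁ : ℝ) : EReal) + ((ε - r : ℝ) : EReal) := EReal.coe_add _ _
      _ ≤ upperIntegral μ (fun t => f t y) + ((ε - r : ℝ) : EReal) :=
          add_le_add_left hc _
      _ = upperIntegral μ (fun t => f t y) - (r : EReal) + (ε : EReal) := by
          have h1 : ((ε - r : ℝ) : EReal) = ((-r : ℝ) : EReal) + ((ε : ℝ) : EReal) := by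
            norm_cast; ring
          rw [h1, EReal.coe_neg, ← add_assoc, ← sub_eq_add_neg]
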